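/- For all n ≥ 2: if k is divisible by 2 then |Q(n,k)| ≥ 2^{(k/2)^n}, and if k is divisible by 3 then |Q(n,k)| ≥ (3·2^n)^{(k/3)^n} > 2^{n·(k/3)^n}. -/

import Mathlib

/-- An `n`-ary quasigroup on `S`. -/
def IsNQuasigroup {S : Type*} {n : ℕ} (f : (Fin n → S) → S) : Prop :=
  ∀ (i : Fin n) (x : Fin n → S), Function.Bijective fun a => f (Function.update x i a)

section Aux
variable {n : ℕ} {A B : Type*}

lemma update_fst (x : Fin n → A × B) (i : Fin n) (p : A × B) :
    (fun j => (Function.update x i p j).1) = Function.update (fun j => (x j).1) i p.1 := by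
  funext j
  rcases eq_or_ne j i with h | h
  · subst h; simp
  · simp [h]

lemma update_snd (x : Fin n → A × B) (i : Fin n) (p : A × B) :
    (fun j => (Function.update x i p j).2) = Function.update (fun j => (x j).2) i p.2 := by
  funext j
  rcases eq_or_ne j i with h | h
  · subst h; simp
  · simp [h]

lemma update_comp (e : A → B) (x : Fin n → A) (i : Fin n) (a : A) :
    (fun j => e (Function.update x i a j)) = Function.update (fun j => e (x j)) i (e a) := by
  funext j
  rcases eq_or_ne j i with h | h
  · subst h; simp
  · simp [h]

lemma prod_quasigroup (g : (Fin n → A) → A) (hg : IsNQuasigroup g)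
    (h : (Fin n → A) → (Fin n → B) → B) (hh : ∀ u, IsNQuasigroup (h u)) :
    IsNQuasigroup (fun x : Fin n → A × B =>
      (g (fun j => (x j).1), h (fun j => (x j).1) (fun j => (x j).2))) := by
  intro i x
  have key : (fun p : A × B => (g (fun j => (Function.update x i p j).1),
      h (fun j => (Function.update x i p j).1) (fun j => (Function.update x i p j).2)))
      = fun p : A × B => (g (Function.update (fun j => (x j).1) i p.1),
        h (Function.update (fun j => (x j).1) i p.1)
          (Function.update (fun j => (x j).2) i p.2)) := by
    funext p; rw [update_fst, update_snd]
  show Function.Bijective _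
  simp only [key]
  constructor
  · rintro ⟨a, b⟩ ⟨a', b'⟩ hab
    simp only [Prod.mk.injEq] at hab
    have ha : a = a' := (hg i _).1 hab.1
    subst ha
    have hb : b = b' := (hh _ i _).1 hab.2
    simp [hb]
  · rintro ⟨c, d⟩
    obtain ⟨a, ha⟩ := (hg i (fun j => (x j).1)).2 c
    obtain ⟨b, hb⟩ := (hh (Function.update (fun j => (x j).1) i a) i (fun j => (x j).2)).2 d
    exact ⟨(a, b), by simp [ha, hb]⟩

lemma quasigroup_equiv (e : A ≃ B) (f : (Fin n → B) → B) (hf : IsNQuasigroup f) :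
    IsNQuasigroup (fun x : Fin n → A => e.symm (f (fun j => e (x j)))) := by
  intro i x
  have key : (fun a : A => e.symm (f (fun j => e (Function.update x i a j))))
      = e.symm ∘ (fun b => f (Function.update (fun j => e (x j)) i b)) ∘ e := by
    funext a
    simp only [Function.comp_apply]
    rw [update_comp]
  show Function.Bijective _
  simp only [key]
  exact e.symm.bijective.comp ((hf i _).comp e.bijective)

lemma sum_quasigroup {M : Type*} [AddCommGroup M] :
    IsNQuasigroup (fun u : Fin n → M => ∑ j, u j) := by
  intro i u
  have key : (fun a : M => ∑ j, Function.update u i a j)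
      = fun a => a + ∑ j ∈ Finset.univ \ {i}, u j := by
    funext a
    exact Finset.sum_update_of_mem (Finset.mem_univ i) u a
  show Function.Bijective _
  simp only [key]
  exact (Equiv.addRight _).bijective

lemma affine_quasigroup {R : Type*} [CommRing R] (c : R) (ε : Fin n → Rˣ) :
    IsNQuasigroup (fun v : Fin n → R => c + ∑ j, (ε j : R) * v j) := by
  intro i v
  have key : (fun a : R => c + ∑ j, (ε j : R) * Function.update v i a j)
      = fun a => (ε i : R) * a +
          (c + ∑ j ∈ Finset.univ \ {i}, (ε j : R) * v j) := by
    funext a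
    have h1 : ∀ j, (ε j : R) * Function.update v i a j
        = Function.update (fun j => (ε j : R) * v j) i ((ε i : R) * a) j := by
      intro j
      rcases eq_or_ne j i with h | h
      · subst h; simp
      · simp [h]
    simp_rw [h1]
    rw [Finset.sum_update_of_mem (Finset.mem_univ i)]
    ring
  show Function.Bijective _
  simp only [key]
  constructor
  · intro a a' h
    have h2 : (ε i : R) * a = (ε i : R) * a' := add_right_cancel h
    calc a = (↑(ε i)⁻¹ : R) * ((ε i : R) * a) := by
            rw [← mul_assoc, Units.inv_mul, one_mul]
      _ = (↑(ε i)⁻¹ : R) * ((ε i : R) * a') := by rw [h2]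
      _ = a' := by rw [← mul_assoc, Units.inv_mul, one_mul]
  · intro y
    refine ⟨(↑(ε i)⁻¹ : R) * (y - (c + ∑ j ∈ Finset.univ \ {i}, (ε j : R) * v j)), ?_⟩
    dsimp only
    rw [← mul_assoc, Units.mul_inv, one_mul]
    ring

lemma const_add_sum_quasigroup {M : Type*} [AddCommGroup M] (c : M) :
    IsNQuasigroup (fun v : Fin n → M => c + ∑ j, v j) := by
  intro i v
  have key : (fun a : M => c + ∑ j, Function.update v i a j)
      = fun a => a + (c + ∑ j ∈ Finset.univ \ {i}, v j) := by
    funext a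
    rw [Finset.sum_update_of_mem (Finset.mem_univ i)]
    abel
  show Function.Bijective _
  simp only [key]
  exact (Equiv.addRight _).bijective

end Aux

/-- `|Q(n,k)|`: the number of `n`-ary quasigroup operations on a fixed
`k`-element set. -/
noncomputable def numQuasigroups (n k : ℕ) : ℕ :=
  Nat.card {f : (Fin n → Fin k) → Fin k // IsNQuasigroup f}

lemma card_lower_bound {n k : ℕ} {P : Type*} [Fintype P]
    (Φ : P → {f : (Fin n → Fin k) → Fin k // IsNQuasigroup f})
    (hΦ : Function.Injective Φ) : Fintype.card P ≤ numQuasigroups n k := by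
  haveI : Finite {f : (Fin n → Fin k) → Fin k // IsNQuasigroup f} := by
    rcases Nat.eq_zero_or_pos k with rfl | hk
    · exact Finite.of_injective (fun f => (f : (Fin n → Fin 0) → Fin 0)) (fun a b h => Subtype.ext h)
    · infer_instance
  have := Nat.card_le_card_of_injective Φ hΦ
  rwa [Nat.card_eq_fintype_card] at this

theorem numQuasigroups_div_two_three {n k : ℕ} (hn : 2 ≤ n) (hk : 0 < k) :
    (2 ∣ k → numQuasigroups n k ≥ 2 ^ (k / 2) ^ n) ∧
    (3 ∣ k → numQuasigroups n k ≥ (3 * 2 ^ n) ^ (k / 3) ^ n ∧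
      (3 * 2 ^ n) ^ (k / 3) ^ n > 2 ^ (n * (k / 3) ^ n)) := by
  constructor
  · -- 2 ∣ k
    intro h2
    set m := k / 2 with hm
    haveI : NeZero m := ⟨by
      have : 2 ≤ k := Nat.le_of_dvd hk h2
      omega⟩
    have hcard : Fintype.card (Fin k) = Fintype.card (ZMod m × ZMod 2) := by
      simp [ZMod.card, Nat.div_mul_cancel h2, hm, Nat.mul_div_cancel' h2]
    let e : Fin k ≃ ZMod m × ZMod 2 := Fintype.equivOfCardEq hcard
    let F : ((Fin n → ZMod m) → ZMod 2) → (Fin n → ZMod m × ZMod 2) → ZMod m × ZMod 2 :=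
      fun ε y => (∑ j, (y j).1, ε (fun j => (y j).1) + ∑ j, (y j).2)
    have hFq : ∀ ε, IsNQuasigroup (F ε) := fun ε =>
      prod_quasigroup _ sum_quasigroup _ (fun u => const_add_sum_quasigroup (ε u))
    let Φ : ((Fin n → ZMod m) → ZMod 2) → {f : (Fin n → Fin k) → Fin k // IsNQuasigroup f} :=
      fun ε => ⟨fun x => e.symm (F ε (fun j => e (x j))), quasigroup_equiv e _ (hFq ε)⟩
    have hΦ : Function.Injective Φ := by
      intro ε ε' h
      have hF : F ε = F ε' := by
        funext y
        have := congrFun (congrArg Subtype.val h) (fun j => e.symm (y j))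
        simpa [Φ] using this
      funext u
      have := congrArg Prod.snd (congrFun hF (fun j => (u j, (0 : ZMod 2))))
      simpa [F] using this
    have hb := card_lower_bound Φ hΦ
    have hc : Fintype.card ((Fin n → ZMod m) → ZMod 2) = 2 ^ m ^ n := by
      simp [Fintype.card_fun, ZMod.card]
    rw [hc] at hb
    exact hb
  · -- 3 ∣ k
    intro h3
    set m := k / 3 with hm
    haveI : NeZero m := ⟨by
      have : 3 ≤ k := Nat.le_of_dvd hk h3
      omega⟩
    constructor
    · have hcard : Fintype.card (Fin k) = Fintype.card (ZMod m × ZMod 3) := by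
        simp [ZMod.card, hm, Nat.div_mul_cancel h3, Nat.mul_div_cancel' h3]
      let e : Fin k ≃ ZMod m × ZMod 3 := Fintype.equivOfCardEq hcard
      let P := (Fin n → ZMod m) → ZMod 3 × (Fin n → (ZMod 3)ˣ)
      let F : P → (Fin n → ZMod m × ZMod 3) → ZMod m × ZMod 3 :=
        fun p y => (∑ j, (y j).1,
          (p (fun j => (y j).1)).1 + ∑ j, ((p (fun j => (y j).1)).2 j : ZMod 3) * (y j).2)
      have hFq : ∀ p, IsNQuasigroup (F p) := fun p =>
        prod_quasigroup _ sum_quasigroup _ (fun u => affine_quasigroup ((p u).1) ((p u).2))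
      let Φ : P → {f : (Fin n → Fin k) → Fin k // IsNQuasigroup f} :=
        fun p => ⟨fun x => e.symm (F p (fun j => e (x j))), quasigroup_equiv e _ (hFq p)⟩
      have hΦ : Function.Injective Φ := by
        intro p p' h
        have hF : F p = F p' := by
          funext y
          have := congrFun (congrArg Subtype.val h) (fun j => e.symm (y j))
          simpa [Φ] using this
        funext u
        have hc0 : (p u).1 = (p' u).1 := by
          have := congrArg Prod.snd (congrFun hF (fun j => (u j, (0 : ZMod 3))))
          simpa [F] using this
        have hcε : ∀ t, (p u).2 t = (p' u).2 t := by
          intro t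
          have := congrArg Prod.snd
            (congrFun hF (fun j => (u j, if j = t then (1 : ZMod 3) else 0)))
          simp only [F, mul_ite, mul_one, mul_zero, Finset.sum_ite_eq',
            Finset.mem_univ, if_true] at this
          have h2 : ((p u).2 t : ZMod 3) = ((p' u).2 t : ZMod 3) := by
            rw [hc0] at this
            exact add_left_cancel this
          exact Units.ext h2
        exact Prod.ext hc0 (funext hcε)
      have hb := card_lower_bound Φ hΦ
      have hc : Fintype.card P = (3 * 2 ^ n) ^ m ^ n := by
        have hu : Fintype.card (ZMod 3)ˣ = 2 := by
          rw [ZMod.card_units_eq_totient]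
          decide
        simp [P, Fintype.card_fun, ZMod.card, hu]
      rw [hc] at hb
      exact hb
    · have hm1 : 1 ≤ m := by
        have : 3 ≤ k := Nat.le_of_dvd hk h3
        omega
      have hN : 0 < m ^ n := Nat.pow_pos hm1
      calc 2 ^ (n * m ^ n) = (2 ^ n) ^ m ^ n := by rw [pow_mul]
        _ < (3 * 2 ^ n) ^ m ^ n := by
            refine Nat.pow_lt_pow_left ?_ hN.ne'
            have h2n : 0 < 2 ^ n := Nat.pow_pos (by norm_num)
            omega
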